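/- Let H be an antichain hypergraph on a vertex set of size 2n with p = 1/(2n), and let F be a subfamily of pairwise incomparable sets, each of which is a proper subset of some edge of H and each of size at least 2. Define H' = (H \ ⟨F⟩) ∪ F, where ⟨F⟩ denotes the up-closure of F (all sets containing some member of F). Then w_p(H'^{>1}) ≥ w_p(H^{>1}), where H^{>1} denotes edges of size at least 2. (Lemma 4.8: the weight of large edges does not decrease when replacing edges by incomparable shadows, given all edges of F have size ≥ 2.) -/

import Mathlib

open Finset

private lemma lym_aux {α : Type*} [Fintype α] [DecidableEq α] {𝒜 : Finset (Finset α)}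
    (h : IsAntichain (· ⊆ ·) (𝒜 : Set (Finset α))) :
    ∑ S ∈ 𝒜, (1 : ℝ) / (Fintype.card α).choose S.card ≤ 1 := by
  classical
  have hmap : ∀ S ∈ 𝒜, S.card ∈ Finset.range (Fintype.card α + 1) := by
    intro S _
    simpa [Nat.lt_succ_iff] using (Finset.card_le_univ S).trans_eq Finset.card_univ
  calc ∑ S ∈ 𝒜, (1 : ℝ) / (Fintype.card α).choose S.card
      = ∑ r ∈ Finset.range (Fintype.card α + 1),
          ∑ S ∈ 𝒜.filter (fun S => S.card = r), (1:ℝ)/(Fintype.card α).choose S.card :=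
        (Finset.sum_fiberwise_of_maps_to hmap _).symm
    _ = ∑ r ∈ Finset.range (Fintype.card α + 1),
          ((𝒜 # r).card : ℝ) / (Fintype.card α).choose r := by
        refine Finset.sum_congr rfl fun r _ => ?_
        have hsl : 𝒜 # r = 𝒜.filter (fun S => S.card = r) := by
          ext S; simp [Finset.mem_slice]
        rw [← hsl, Finset.sum_congr rfl (fun S hS => by
              rw [(Finset.mem_slice.1 hS).2]),
            Finset.sum_const, nsmul_eq_mul, mul_one_div]
    _ ≤ 1 := Finset.sum_card_slice_div_choose_le_one h

/-- Replacing the up-closure of a family F of incomparable proper sub-edges (each of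
size ≥ 2) by F itself does not decrease the p-weight of edges of size ≥ 2,
for an antichain H on 2n vertices with p = 1/(2n). -/
theorem stmt_12 {V : Type*} [Fintype V] [DecidableEq V] (n : ℕ)
    (H F : Finset (Finset V)) (hV : Fintype.card V = 2 * n)
    (hH : IsAntichain (· ⊆ ·) (H : Set (Finset V)))
    (hF : IsAntichain (· ⊆ ·) (F : Set (Finset V)))
    (hFsub : ∀ A ∈ F, ∃ E ∈ H, A ⊂ E)
    (hF2 : ∀ A ∈ F, 2 ≤ A.card) :
    ∑ E ∈ H.filter (fun E => 2 ≤ E.card), (1 / (2 * n : ℝ)) ^ E.card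
    ≤ ∑ E ∈ ((H \ H.filter (fun E => ∃ A ∈ F, A ⊆ E)) ∪ F).filter (fun E => 2 ≤ E.card),
        (1 / (2 * n : ℝ)) ^ E.card := by
  classical
  rcases Nat.eq_zero_or_pos n with hn | hn
  · subst hn
    have hL : H.filter (fun E => 2 ≤ E.card) = ∅ := by
      rw [Finset.filter_eq_empty_iff]
      intro E hE hc
      have := (Finset.card_le_univ E).trans_eq Finset.card_univ
      omega
    rw [hL, Finset.sum_empty]
    exact Finset.sum_nonneg fun E _ => pow_nonneg (by positivity) _
  -- main case
  have hp0 : (0:ℝ) ≤ 1 / (2 * n) := by positivity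
  set p : ℝ := 1 / (2 * n) with hp
  have hAnH : ∀ A ∈ F, A ∉ H := by
    intro A hA hAH
    obtain ⟨E, hE, hAE⟩ := hFsub A hA
    exact hH hAH hE hAE.ne hAE.subset
  set D : Finset (Finset V) := H.filter (fun E => ∃ A ∈ F, A ⊆ E) with hD
  have hdisj : Disjoint (H \ D) F := by
    rw [Finset.disjoint_left]
    intro E hE hEF
    exact hAnH E hEF (Finset.mem_sdiff.1 hE).1
  have hHsplit : H = (H \ D) ∪ D := (Finset.sdiff_union_of_subset (Finset.filter_subset _ _)).symm
  rw [Finset.filter_union, Finset.sum_union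
      (Finset.disjoint_filter_filter hdisj)]
  conv_lhs => rw [hHsplit]
  rw [Finset.filter_union, Finset.sum_union
      (Finset.disjoint_filter_filter Finset.sdiff_disjoint)]
  have hFfilter : F.filter (fun E => 2 ≤ E.card) = F :=
    Finset.filter_eq_self.2 hF2
  rw [hFfilter]
  refine add_le_add le_rfl ?_
  have step1 : ∑ E ∈ D.filter (fun E => 2 ≤ E.card), p ^ E.card ≤ ∑ E ∈ D, p ^ E.card :=
    Finset.sum_le_sum_of_subset_of_nonneg (Finset.filter_subset _ _)
      (fun E _ _ => pow_nonneg hp0 _)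
  refine step1.trans ?_
  -- choice function
  set f : Finset V → Finset V := fun E =>
    if h : ∃ A ∈ F, A ⊆ E then h.choose else ∅ with hf
  have hfspec : ∀ E ∈ D, f E ∈ F ∧ f E ⊆ E := by
    intro E hE
    have h : ∃ A ∈ F, A ⊆ E := (Finset.mem_filter.1 hE).2
    simp only [hf, dif_pos h]
    exact h.choose_spec
  have hmaps : ∀ E ∈ D, f E ∈ F := fun E hE => (hfspec E hE).1
  rw [← Finset.sum_fiberwise_of_maps_to hmaps (fun E => p ^ E.card)]
  refine Finset.sum_le_sum ?_
  intro A hA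
  set T : Finset (Finset V) := D.filter (fun E => f E = A) with hT
  have hTfacts : ∀ E ∈ T, A ⊆ E ∧ E ∈ H := by
    intro E hE
    obtain ⟨hED, hfE⟩ := Finset.mem_filter.1 hE
    exact ⟨hfE ▸ (hfspec E hED).2, (Finset.mem_filter.1 hED).1⟩
  have hinj : ∀ E₁ ∈ T, ∀ E₂ ∈ T, E₁ \ A = E₂ \ A → E₁ = E₂ := by
    intro E₁ h₁ E₂ h₂ hEq
    have hA1 := (hTfacts E₁ h₁).1
    have hA2 := (hTfacts E₂ h₂).1
    rw [← Finset.sdiff_union_of_subset hA1, ← Finset.sdiff_union_of_subset hA2, hEq]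
  set I : Finset (Finset V) := T.image (· \ A) with hI
  have hIanti : IsAntichain (· ⊆ ·) (I : Set (Finset V)) := by
    intro S₁ hS₁ S₂ hS₂ hne hsub
    obtain ⟨E₁, hE₁, rfl⟩ := Finset.mem_image.1 (by exact_mod_cast hS₁)
    obtain ⟨E₂, hE₂, rfl⟩ := Finset.mem_image.1 (by exact_mod_cast hS₂)
    obtain ⟨hA1, hH1⟩ := hTfacts E₁ hE₁
    obtain ⟨hA2, hH2⟩ := hTfacts E₂ hE₂
    have hsubE : E₁ ⊆ E₂ := by
      intro x hx
      by_cases hxA : x ∈ A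
      · exact hA2 hxA
      · exact (Finset.sdiff_subset) (hsub (Finset.mem_sdiff.2 ⟨hx, hxA⟩))
    have hneE : E₁ ≠ E₂ := fun h => hne (by rw [h])
    exact hH hH1 hH2 hneE hsubE
  have hterm : ∀ S ∈ I, p ^ S.card ≤ (1:ℝ) / (Fintype.card V).choose S.card := by
    intro S hS
    have hSle : S.card ≤ Fintype.card V :=
      (Finset.card_le_univ S).trans_eq Finset.card_univ
    have hCpos : 0 < (Fintype.card V).choose S.card := Nat.choose_pos hSle
    have hCle : ((Fintype.card V).choose S.card : ℝ) ≤ (2 * n : ℝ) ^ S.card := by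
      calc ((Fintype.card V).choose S.card : ℝ)
          ≤ ((Fintype.card V : ℕ) ^ S.card : ℕ) :=
            Nat.cast_le.2 (Nat.choose_le_pow _ _)
        _ = (2 * n : ℝ) ^ S.card := by rw [hV]; push_cast; ring
    rw [hp, one_div_pow]
    have h2n : (0:ℝ) < 2 * n := by positivity
    exact one_div_le_one_div_of_le (by exact_mod_cast hCpos) hCle
  have hlym : ∑ S ∈ I, p ^ S.card ≤ 1 :=
    (Finset.sum_le_sum hterm).trans (lym_aux hIanti)
  calc ∑ E ∈ T, p ^ E.card
      = ∑ E ∈ T, p ^ (E \ A).card * p ^ A.card := by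
        refine Finset.sum_congr rfl fun E hE => ?_
        rw [← pow_add, Finset.card_sdiff_add_card_eq_card (hTfacts E hE).1]
    _ = (∑ S ∈ I, p ^ S.card) * p ^ A.card := by
        rw [← Finset.sum_mul, hI, Finset.sum_image hinj]
    _ ≤ 1 * p ^ A.card :=
        mul_le_mul_of_nonneg_right hlym (pow_nonneg hp0 _)
    _ = p ^ A.card := one_mul _
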